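/- For any r ≥ 0 and s, t > 0, the logarithmic mean satisfies r(θ₁(s,t) + θ₂(s,t)) − (θ(r,s) + θ(r,t)) ≥ −θ(s,t). -/

import Mathlib

open Real MeasureTheory intervalIntegral Set

/-- The logarithmic mean, extended by `θ(s,s) = s` and `θ(s,0) = θ(0,t) = 0`. -/
noncomputable def logMean (s t : ℝ) : ℝ :=
  if s = t then s else if s = 0 ∨ t = 0 then 0 else (s - t) / (Real.log s - Real.log t)

/-- Partial derivative of the logarithmic mean in the first variable. -/
noncomputable def logMean₁ (s t : ℝ) : ℝ := deriv (fun x => logMean x t) s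

/-- Partial derivative of the logarithmic mean in the second variable. -/
noncomputable def logMean₂ (s t : ℝ) : ℝ := deriv (fun y => logMean s y) t

lemma logMean_comm (s t : ℝ) : logMean s t = logMean t s := by
  unfold logMean
  rcases eq_or_ne s t with rfl | h
  · simp
  · rw [if_neg h, if_neg (Ne.symm h)]
    by_cases h0 : s = 0 ∨ t = 0
    · rw [if_pos h0, if_pos (Or.symm h0)]
    · rw [if_neg h0, if_neg (fun hh => h0 (Or.symm hh)),
        ← neg_sub t s, ← neg_sub (Real.log t) (Real.log s), neg_div_neg_eq]

lemma cont_rpow_base {b : ℝ} (hb : b ≠ 0) : Continuous fun a : ℝ => b ^ a :=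
  continuous_iff_continuousAt.2 fun _ => Real.continuousAt_const_rpow hb

lemma integral_exp_mul_ (c : ℝ) (hc : c ≠ 0) :
    ∫ a in (0:ℝ)..1, Real.exp (c * a) = (Real.exp c - 1) / c := by
  have h : ∀ x ∈ Set.uIcc (0:ℝ) 1, HasDerivAt (fun a => Real.exp (c * a) / c) (Real.exp (c * x)) x := by
    intro x _
    have h1 : HasDerivAt (fun a : ℝ => c * a) c x := by
      simpa using (hasDerivAt_id x).const_mul c
    have h2 := (Real.hasDerivAt_exp (c * x)).comp x h1
    have h3 := h2.div_const c
    exact h3.congr_deriv (mul_div_cancel_right₀ _ hc)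
  have hint : IntervalIntegrable (fun a => Real.exp (c * a)) volume 0 1 :=
    (Real.continuous_exp.comp (continuous_const.mul continuous_id)).intervalIntegrable 0 1
  rw [intervalIntegral.integral_eq_sub_of_hasDerivAt h hint]
  simp [sub_div]

lemma logMean_eq_integral {s t : ℝ} (hs : 0 < s) (ht : 0 < t) :
    logMean s t = ∫ a in (0:ℝ)..1, s ^ a * t ^ (1 - a) := by
  rcases eq_or_ne s t with rfl | hst
  · have h : EqOn (fun a : ℝ => s ^ a * s ^ (1 - a)) (fun _ => s) (uIcc (0:ℝ) 1) := by
      intro a _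
      simp only
      rw [← Real.rpow_add hs]
      norm_num
    rw [intervalIntegral.integral_congr h]
    simp [logMean]
  · set c := Real.log s - Real.log t with hc
    have hcne : c ≠ 0 := by
      rw [hc, sub_ne_zero]
      exact fun h => hst (Real.log_injOn_pos (Set.mem_Ioi.2 hs) (Set.mem_Ioi.2 ht) h)
    have key : ∀ a : ℝ, s ^ a * t ^ (1 - a) = t * Real.exp (c * a) := by
      intro a
      have h2 : t * Real.exp (c * a) = Real.exp (Real.log t + c * a) := by
        rw [Real.exp_add, Real.exp_log ht]
      rw [h2, Real.rpow_def_of_pos hs, Real.rpow_def_of_pos ht, ← Real.exp_add]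
      congr 1
      rw [hc]; ring
    rw [intervalIntegral.integral_congr (g := fun a => t * Real.exp (c * a))
      (fun a _ => key a)]
    rw [intervalIntegral.integral_const_mul, integral_exp_mul_ c hcne]
    have : Real.exp c = s / t := by
      rw [hc, Real.exp_sub, Real.exp_log hs, Real.exp_log ht]
    rw [this]
    unfold logMean
    rw [if_neg hst, if_neg (by push_neg; exact ⟨hs.ne', ht.ne'⟩), ← hc]
    field_simp

lemma hasDerivAt_logMean {s t : ℝ} (hs : 0 < s) (ht : 0 < t) :
    HasDerivAt (fun x => logMean x t)
      (∫ a in (0:ℝ)..1, a * s ^ (a - 1) * t ^ (1 - a)) s := by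
  set C : ℝ := (max 1 (s / 2)⁻¹) * max 1 t with hCdef
  have hball : ∀ x ∈ Metric.ball s (s / 2), s / 2 < x := by
    intro x hx
    rw [Metric.mem_ball, Real.dist_eq, abs_sub_lt_iff] at hx
    linarith [hx.2]
  have hder := intervalIntegral.hasDerivAt_integral_of_dominated_loc_of_deriv_le
      (F := fun x a => x ^ a * t ^ (1 - a))
      (F' := fun x a => a * x ^ (a - 1) * t ^ (1 - a))
      (x₀ := s) (s := Metric.ball s (s / 2)) (a := 0) (b := 1) (bound := fun _ => C) (μ := volume)
      (Metric.ball_mem_nhds s (half_pos hs))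
      ?_ ?_ ?_ ?_ ?_ ?_
  · have heq : (fun x => logMean x t) =ᶠ[nhds s] fun x => ∫ a in (0:ℝ)..1, x ^ a * t ^ (1 - a) := by
      filter_upwards [eventually_gt_nhds hs] with x hx
      exact logMean_eq_integral hx ht
    exact hder.2.congr_of_eventuallyEq heq
  · filter_upwards [eventually_gt_nhds hs] with x hx
    exact (((cont_rpow_base hx.ne').mul
      ((cont_rpow_base ht.ne').comp (continuous_const.sub continuous_id)))).aestronglyMeasurable
  · exact ((cont_rpow_base hs.ne').mul
      ((cont_rpow_base ht.ne').comp (continuous_const.sub continuous_id))).intervalIntegrable 0 1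
  · exact ((continuous_id.mul ((cont_rpow_base hs.ne').comp (continuous_id.sub continuous_const))).mul
      ((cont_rpow_base ht.ne').comp (continuous_const.sub continuous_id))).aestronglyMeasurable
  · refine Filter.Eventually.of_forall fun a ha => fun x hx => ?_
    rw [Set.uIoc_of_le (zero_le_one)] at ha
    have hx2 : s / 2 < x := hball x hx
    have hx0 : 0 < x := lt_trans (half_pos hs) hx2
    have ha0 : 0 < a := ha.1
    have ha1 : a ≤ 1 := ha.2
    have hb1 : x ^ (a - 1) ≤ max 1 (s / 2)⁻¹ := by
      rcases le_or_gt 1 x with h1 | h1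
      · exact le_trans (Real.rpow_le_one_of_one_le_of_nonpos h1 (by linarith)) (le_max_left _ _)
      · have : x ^ (a - 1) ≤ x ^ (-1 : ℝ) :=
          Real.rpow_le_rpow_of_exponent_ge hx0 h1.le (by linarith)
        rw [Real.rpow_neg_one] at this
        refine le_trans this (le_trans ?_ (le_max_right _ _))
        exact inv_anti₀ (half_pos hs) hx2.le
    have hb2 : t ^ (1 - a) ≤ max 1 t := by
      rcases le_or_gt 1 t with h1 | h1
      · refine le_trans ?_ (le_max_right _ _)
        calc t ^ (1 - a) ≤ t ^ (1 : ℝ) :=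
              Real.rpow_le_rpow_of_exponent_le h1 (by linarith)
          _ = t := Real.rpow_one t
      · exact le_trans (Real.rpow_le_one ht.le h1.le (by linarith)) (le_max_left _ _)
    have hpos1 : (0:ℝ) ≤ x ^ (a - 1) := (Real.rpow_pos_of_pos hx0 _).le
    have hpos2 : (0:ℝ) ≤ t ^ (1 - a) := (Real.rpow_pos_of_pos ht _).le
    rw [Real.norm_eq_abs, abs_of_nonneg (by positivity)]
    calc a * x ^ (a - 1) * t ^ (1 - a) ≤ 1 * (max 1 (s / 2)⁻¹) * max 1 t := by
          apply mul_le_mul (mul_le_mul ha1 hb1 hpos1 zero_le_one) hb2 hpos2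
          positivity
      _ = C := by rw [hCdef, one_mul]
  · exact intervalIntegrable_const
  · refine Filter.Eventually.of_forall fun a ha => fun x hx => ?_
    have hx0 : 0 < x := lt_trans (half_pos hs) (hball x hx)
    have h := (Real.hasDerivAt_rpow_const (x := x) (p := a) (Or.inl hx0.ne')).mul_const
      (t ^ (1 - a))
    exact h.congr_deriv (by ring)

lemma pointwise_tangent {r s t a : ℝ} (hr : 0 ≤ r) (hs : 0 < s) (ht : 0 < t)
    (ha0 : 0 ≤ a) (ha1 : a ≤ 1) :
    r ^ a * t ^ (1 - a) ≤ s ^ a * t ^ (1 - a) + a * s ^ (a - 1) * t ^ (1 - a) * (r - s) := by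
  have hb : (r / s) ^ a ≤ 1 + a * (r / s - 1) := by
    have h := rpow_one_add_le_one_add_mul_self (s := r / s - 1)
      (by have : 0 ≤ r / s := div_nonneg hr hs.le; linarith) ha0 ha1
    simpa using h
  have hsa : (0:ℝ) < s ^ a := Real.rpow_pos_of_pos hs a
  have hta : (0:ℝ) < t ^ (1 - a) := Real.rpow_pos_of_pos ht _
  have h2 : (r / s) ^ a * (s ^ a * t ^ (1 - a)) ≤ (1 + a * (r / s - 1)) * (s ^ a * t ^ (1 - a)) :=
    mul_le_mul_of_nonneg_right hb (by positivity)
  have hra : (r / s) ^ a * s ^ a = r ^ a := by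
    rw [Real.div_rpow hr hs.le, div_mul_cancel₀ _ hsa.ne']
  have hs1 : s ^ (a - 1) = s ^ a / s := by
    rw [Real.rpow_sub hs, Real.rpow_one]
  calc r ^ a * t ^ (1 - a) = (r / s) ^ a * (s ^ a * t ^ (1 - a)) := by
        rw [← mul_assoc, hra]
    _ ≤ (1 + a * (r / s - 1)) * (s ^ a * t ^ (1 - a)) := h2
    _ = s ^ a * t ^ (1 - a) + a * (s ^ a / s) * t ^ (1 - a) * (r - s) := by
        field_simp
    _ = s ^ a * t ^ (1 - a) + a * s ^ (a - 1) * t ^ (1 - a) * (r - s) := by rw [← hs1]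

lemma intble_mean {s t : ℝ} (hs : 0 < s) (ht : 0 < t) :
    IntervalIntegrable (fun a : ℝ => s ^ a * t ^ (1 - a)) volume 0 1 :=
  ((cont_rpow_base hs.ne').mul
    ((cont_rpow_base ht.ne').comp (continuous_const.sub continuous_id))).intervalIntegrable 0 1

lemma intble_deriv {s t : ℝ} (hs : 0 < s) (ht : 0 < t) :
    IntervalIntegrable (fun a : ℝ => a * s ^ (a - 1) * t ^ (1 - a)) volume 0 1 :=
  ((continuous_id.mul ((cont_rpow_base hs.ne').comp (continuous_id.sub continuous_const))).mul
    ((cont_rpow_base ht.ne').comp (continuous_const.sub continuous_id))).intervalIntegrable 0 1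

lemma euler_identity {s t : ℝ} (hs : 0 < s) (ht : 0 < t) :
    s * (∫ a in (0:ℝ)..1, a * s ^ (a - 1) * t ^ (1 - a)) +
      t * (∫ a in (0:ℝ)..1, a * t ^ (a - 1) * s ^ (1 - a)) = logMean s t := by
  have h1 : s * (∫ a in (0:ℝ)..1, a * s ^ (a - 1) * t ^ (1 - a))
      = ∫ a in (0:ℝ)..1, a * s ^ a * t ^ (1 - a) := by
    rw [← intervalIntegral.integral_const_mul]
    apply intervalIntegral.integral_congr
    intro a _
    have : s * s ^ (a - 1) = s ^ a := by
      rw [Real.rpow_sub hs, Real.rpow_one, mul_div_cancel₀ _ hs.ne']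
    simp only
    calc s * (a * s ^ (a - 1) * t ^ (1 - a)) = a * (s * s ^ (a - 1)) * t ^ (1 - a) := by ring
      _ = a * s ^ a * t ^ (1 - a) := by rw [this]
  have h2 : t * (∫ a in (0:ℝ)..1, a * t ^ (a - 1) * s ^ (1 - a))
      = ∫ a in (0:ℝ)..1, (1 - a) * s ^ a * t ^ (1 - a) := by
    have h2a : t * (∫ a in (0:ℝ)..1, a * t ^ (a - 1) * s ^ (1 - a))
        = ∫ a in (0:ℝ)..1, a * t ^ a * s ^ (1 - a) := by
      rw [← intervalIntegral.integral_const_mul]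
      apply intervalIntegral.integral_congr
      intro a _
      have : t * t ^ (a - 1) = t ^ a := by
        rw [Real.rpow_sub ht, Real.rpow_one, mul_div_cancel₀ _ ht.ne']
      simp only
      calc t * (a * t ^ (a - 1) * s ^ (1 - a)) = a * (t * t ^ (a - 1)) * s ^ (1 - a) := by ring
        _ = a * t ^ a * s ^ (1 - a) := by rw [this]
    have h2b := intervalIntegral.integral_comp_sub_left
      (fun a : ℝ => a * t ^ a * s ^ (1 - a)) 1 (a := 0) (b := 1)
    norm_num at h2b
    rw [h2a, ← h2b]
    apply intervalIntegral.integral_congr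
    intro a _
    simp only
    ring_nf
  rw [h1, h2, logMean_eq_integral hs ht]
  rw [← intervalIntegral.integral_add]
  · apply intervalIntegral.integral_congr
    intro a _
    simp only
    ring
  · exact (((continuous_id.mul (cont_rpow_base hs.ne')).mul
      ((cont_rpow_base ht.ne').comp (continuous_const.sub continuous_id)))).intervalIntegrable 0 1
  · exact ((((continuous_const.sub continuous_id).mul (cont_rpow_base hs.ne')).mul
      ((cont_rpow_base ht.ne').comp (continuous_const.sub continuous_id)))).intervalIntegrable 0 1

lemma logMean₁_eq {s t : ℝ} (hs : 0 < s) (ht : 0 < t) :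
    logMean₁ s t = ∫ a in (0:ℝ)..1, a * s ^ (a - 1) * t ^ (1 - a) :=
  (hasDerivAt_logMean hs ht).deriv

lemma logMean₂_eq {s t : ℝ} (hs : 0 < s) (ht : 0 < t) :
    logMean₂ s t = ∫ a in (0:ℝ)..1, a * t ^ (a - 1) * s ^ (1 - a) := by
  unfold logMean₂
  rw [show (fun y => logMean s y) = fun y => logMean y s from funext fun y => logMean_comm s y]
  exact (hasDerivAt_logMean ht hs).deriv

lemma tangent_integral {r s t : ℝ} (hr : 0 < r) (hs : 0 < s) (ht : 0 < t) :
    logMean r t ≤ logMean s t + (r - s) * ∫ a in (0:ℝ)..1, a * s ^ (a - 1) * t ^ (1 - a) := by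
  rw [logMean_eq_integral hr ht, logMean_eq_integral hs ht,
    ← intervalIntegral.integral_const_mul, ← intervalIntegral.integral_add (intble_mean hs ht)
      ((intble_deriv hs ht).const_mul (r - s))]
  apply intervalIntegral.integral_mono_on zero_le_one (intble_mean hr ht)
    ((intble_mean hs ht).add ((intble_deriv hs ht).const_mul (r - s)))
  intro a ha
  have h := pointwise_tangent hr.le hs ht ha.1 ha.2
  linarith [h]

theorem logMean_key_inequality (r s t : ℝ) (hr : 0 ≤ r) (hs : 0 < s) (ht : 0 < t) :
    r * (logMean₁ s t + logMean₂ s t) - (logMean r s + logMean r t) ≥ - logMean s t := by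
  rcases eq_or_lt_of_le hr with rfl | hrpos
  · have h0s : logMean 0 s = 0 := by
      unfold logMean
      rw [if_neg (by exact fun h => hs.ne' h.symm), if_pos (Or.inl rfl)]
    have h0t : logMean 0 t = 0 := by
      unfold logMean
      rw [if_neg (by exact fun h => ht.ne' h.symm), if_pos (Or.inl rfl)]
    have hnn : 0 ≤ logMean s t := by
      rw [logMean_eq_integral hs ht]
      apply intervalIntegral.integral_nonneg zero_le_one
      intro a _
      positivity
    rw [h0s, h0t]
    simp
    linarith
  · have hI := tangent_integral hrpos hs ht
    have hII := tangent_integral hrpos ht hs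
    rw [logMean_comm t s] at hII
    have hE := euler_identity hs ht
    rw [logMean₁_eq hs ht, logMean₂_eq hs ht]
    set A := ∫ a in (0:ℝ)..1, a * s ^ (a - 1) * t ^ (1 - a)
    set B := ∫ a in (0:ℝ)..1, a * t ^ (a - 1) * s ^ (1 - a)
    linarith
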